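/- Let n ≥ 2 be an integer. There exists a family 𝒜 of subsets of [n]² with |𝒜| = 2^{n²-1} (half of all subsets) such that no two A, B ∈ 𝒜 satisfy A Δ B = I² for a non-empty interval I ⊆ [n]. -/

import Mathlib

open Finset

/-- There is a family of half of all subsets of `[n]²` no two members of which
    have symmetric difference equal to `I²` for a non-empty interval `I ⊆ [n]`. -/
theorem stmt_4 (n : ℕ) (hn : 2 ≤ n) :
    ∃ 𝒜 : Finset (Finset (Fin n × Fin n)),
      𝒜.card = 2 ^ (n ^ 2 - 1) ∧
      ∀ A ∈ 𝒜, ∀ B ∈ 𝒜, ∀ a b : Fin n, a ≤ b →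
        symmDiff A B ≠ Finset.Icc a b ×ˢ Finset.Icc a b := by
  have hn0 : 0 < n := by omega
  set w : Fin n × Fin n → ZMod 2 :=
    fun p => if p.1 = p.2 ∨ (p.2 : ℕ) = (p.1 : ℕ) + 1 then 1 else 0 with hw
  set f : Finset (Fin n × Fin n) → ZMod 2 := fun A => ∑ p ∈ A, w p with hf
  have hsymm : ∀ A B : Finset (Fin n × Fin n), f (symmDiff A B) = f A + f B := by
    intro A B
    have h1 : symmDiff A B = (A ∪ B) \ (A ∩ B) := by
      rw [symmDiff_eq_sup_sdiff_inf]; rfl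
    have hsub : A ∩ B ⊆ A ∪ B := (inter_subset_left).trans subset_union_left
    have h2 : f (symmDiff A B) = (∑ p ∈ A ∪ B, w p) - ∑ p ∈ A ∩ B, w p := by
      show (∑ p ∈ symmDiff A B, w p) = _
      rw [h1, Finset.sum_sdiff_eq_sub hsub]
    have h3 : (∑ p ∈ A ∪ B, w p) + ∑ p ∈ A ∩ B, w p = f A + f B := by
      rw [hf]; exact Finset.sum_union_inter
    rw [h2, sub_eq_add_neg, CharTwo.neg_eq, h3]
  refine ⟨univ.filter (fun A => f A = 0), ?_, ?_⟩
  · -- cardinality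
    set x0 : Fin n × Fin n := (⟨0, hn0⟩, ⟨0, hn0⟩) with hx0
    have hfx0 : f {x0} = 1 := by
      show ∑ p ∈ {x0}, w p = 1
      rw [Finset.sum_singleton]
      simp [hw, x0]
    have hflip : ∀ A, f (symmDiff A {x0}) = f A + 1 := by
      intro A; rw [hsymm, hfx0]
    have hbij : (univ.filter (fun A => f A = 0)).card
        = (univ.filter (fun A => ¬ f A = 0)).card := by
      apply Finset.card_nbij' (fun A => symmDiff A {x0}) (fun A => symmDiff A {x0})
      · intro A hA
        simp only [coe_filter, Set.mem_setOf_eq, mem_filter, mem_univ, true_and] at hA ⊢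
        rw [hflip, hA]; decide
      · intro A hA
        simp only [coe_filter, Set.mem_setOf_eq, mem_filter, mem_univ, true_and] at hA ⊢
        have := hflip A
        revert hA this
        generalize f (symmDiff A {x0}) = u
        generalize f A = v
        revert u v; decide
      · intro A _; exact symmDiff_symmDiff_cancel_right {x0} A
      · intro A _; exact symmDiff_symmDiff_cancel_right {x0} A
    have hsumcard : (univ.filter (fun A => f A = 0)).card
        + (univ.filter (fun A => ¬ f A = 0)).card = 2 ^ (n ^ 2) := by
      rw [Finset.card_filter_add_card_filter_not, Finset.card_univ,
        Fintype.card_finset]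
      congr 1
      simp [Fintype.card_prod, sq]
    have hpow : 2 ^ (n ^ 2) = 2 * 2 ^ (n ^ 2 - 1) := by
      have h1 : 1 ≤ n ^ 2 := Nat.one_le_pow _ _ hn0
      rw [← pow_succ']
      congr 1
      omega
    omega
  · -- main property
    intro A hA B hB a b hab heq
    simp only [mem_filter, mem_univ, true_and] at hA hB
    have h0 : f (symmDiff A B) = 0 := by rw [hsymm, hA, hB]; decide
    have h1 : f (Finset.Icc a b ×ˢ Finset.Icc a b) = 1 := by
      show (∑ p ∈ Finset.Icc a b ×ˢ Finset.Icc a b, w p) = 1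
      rw [Finset.sum_product]
      have hbmem : b ∈ Finset.Icc a b := by simp [hab]
      have hinner : ∀ i ∈ Finset.Icc a b,
          (∑ j ∈ Finset.Icc a b, w (i, j)) = if i = b then 1 else 0 := by
        intro i hi
        rw [Finset.mem_Icc] at hi
        by_cases hib : i = b
        · subst hib
          rw [if_pos rfl]
          have : ∀ j ∈ Finset.Icc a i, w (i, j) = if j = i then 1 else 0 := by
            intro j hj
            rw [Finset.mem_Icc] at hj
            have hjle : (j : ℕ) ≤ (i : ℕ) := hj.2
            simp only [hw]
            by_cases hji : j = i
            · subst hji; simp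
            · have h2 : ¬ (i = j) := fun h => hji h.symm
              have h3 : ¬ ((j : ℕ) = (i : ℕ) + 1) := by omega
              simp [h2, h3, hji]
          rw [Finset.sum_congr rfl this, Finset.sum_ite_eq' _ i _]
          simp [hi.1]
        · have hlt : (i : ℕ) < (b : ℕ) := by
            have := hi.2
            rw [Fin.le_def] at this
            rcases lt_or_eq_of_le this with h | h
            · exact h
            · exact absurd (Fin.ext h) hib
          have hi1n : (i : ℕ) + 1 < n := lt_of_le_of_lt hlt b.isLt
          set i' : Fin n := ⟨(i : ℕ) + 1, hi1n⟩ with hi'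
          have hi'mem : i' ∈ Finset.Icc a b := by
            rw [Finset.mem_Icc]
            constructor
            · rw [Fin.le_def]; have := hi.1; rw [Fin.le_def] at this; simp [hi']; omega
            · rw [Fin.le_def]; simp [hi']; omega
          have hii' : i ≠ i' := by
            intro h
            have := congrArg Fin.val h
            simp [hi'] at this
          have hstep : ∀ j ∈ Finset.Icc a b,
              w (i, j) = (if j = i then 1 else 0) + (if j = i' then 1 else 0) := by
            intro j hj
            simp only [hw]
            by_cases hc : i = j ∨ (j : ℕ) = (i : ℕ) + 1
            · rw [if_pos hc]
              rcases hc with h | h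
              · subst h
                rw [if_pos rfl, if_neg hii', add_zero]
              · have hji' : j = i' := by apply Fin.ext; simp [hi', h]
                have hji : j ≠ i := by
                  intro hcon
                  rw [hcon] at h
                  omega
                rw [if_neg hji, if_pos hji', zero_add]
            · rw [if_neg hc]
              push_neg at hc
              have hj1 : j ≠ i := fun h => hc.1 h.symm
              have hj2 : j ≠ i' := by
                intro h
                apply hc.2
                rw [h, hi']
              rw [if_neg hj1, if_neg hj2, add_zero]
          rw [Finset.sum_congr rfl hstep, Finset.sum_add_distrib,
            Finset.sum_ite_eq' _ i _, Finset.sum_ite_eq' _ i' _]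
          have himem : i ∈ Finset.Icc a b := Finset.mem_Icc.mpr hi
          rw [if_pos himem, if_pos hi'mem, if_neg hib]
          decide
      rw [Finset.sum_congr rfl hinner, Finset.sum_ite_eq' _ b _]
      simp [hbmem]
    rw [heq] at h0
    rw [h0] at h1
    exact absurd h1 (by decide)
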